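/- Let H be a separable complex Hilbert space, C a conjugation on H, and let T = A + iB where A is a C-symmetric bounded operator (A* = CAC) and B is a C-skew-symmetric bounded operator (CB*C = −B). Then the following are equivalent: (1) T is C-normal; (2) ‖Tx‖² = ‖Ax‖² + ‖Bx‖² for all x ∈ H; (3) A*B = B*A; (4) AB* = BA*. -/

import Mathlib

open scoped InnerProductSpace
open ContinuousLinearMap TopologicalSpace

/-- A conjugation on a complex Hilbert space: an anti-linear, involutive map
satisfying `⟪C x, C y⟫ = ⟪y, x⟫`. -/
def Conjugation {K : Type*} [NormedAddCommGroup K] [InnerProductSpace ℂ K] (C : K → K) : Prop :=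
  (∀ (a : ℂ) (x y : K), C (a • x + y) = (starRingEnd ℂ) a • C x + C y) ∧
  (∀ x, C (C x) = x) ∧
  (∀ x y : K, ⟪C x, C y⟫_ℂ = ⟪y, x⟫_ℂ)

/-- `T` is `C`-normal: `C T*T C = T T*` (pointwise). -/
def CNormal {K : Type*} [NormedAddCommGroup K] [InnerProductSpace ℂ K] [CompleteSpace K]
    (C : K → K) (T : K →L[ℂ] K) : Prop :=
  ∀ x, C (adjoint T (T (C x))) = T (adjoint T x)

set_option maxHeartbeats 1000000 in
/-- Cartesian decomposition characterization of `C`-normal operators: for `T = A + iB`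
with `A` `C`-symmetric and `B` `C`-skew-symmetric, the following are equivalent:
(1) `T` is `C`-normal; (2) `‖Tx‖² = ‖Ax‖² + ‖Bx‖²` for all `x`; (3) `A*B = B*A`;
(4) `AB* = BA*`. -/
theorem stmt_12 {H : Type*} [NormedAddCommGroup H] [InnerProductSpace ℂ H] [CompleteSpace H]
    [SeparableSpace H]
    (C : H → H) (hC : Conjugation C)
    (A B : H →L[ℂ] H)
    (hA : ∀ x, adjoint A x = C (A (C x)))
    (hB : ∀ x, C (adjoint B (C x)) = -(B x)) :
    (CNormal C (A + Complex.I • B) ↔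
      ∀ x : H, ‖(A + Complex.I • B) x‖ ^ 2 = ‖A x‖ ^ 2 + ‖B x‖ ^ 2) ∧
    ((∀ x : H, ‖(A + Complex.I • B) x‖ ^ 2 = ‖A x‖ ^ 2 + ‖B x‖ ^ 2) ↔
      adjoint A * B = adjoint B * A) ∧
    (adjoint A * B = adjoint B * A ↔ A * adjoint B = B * adjoint A) := by
  obtain ⟨hCadd, hCinv, hCinner⟩ := hC
  have hCinj : Function.Injective C := Function.Involutive.injective hCinv
  have hC0 : C 0 = 0 := by
    have h := hCadd 1 0 0
    simpa using h
  have hCa : ∀ x y : H, C (x + y) = C x + C y := fun x y => by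
    have h := hCadd 1 x y; simpa using h
  have hCs : ∀ (a : ℂ) (x : H), C (a • x) = (starRingEnd ℂ) a • C x := fun a x => by
    have h := hCadd a x 0; simpa [hC0] using h
  have hCn : ∀ x : H, C (-x) = -C x := fun x => by
    have h := hCs (-1) x; simpa using h
  -- basic reformulations of hA, hB
  have hA2 : ∀ x, C (adjoint A x) = A (C x) := fun x => by
    rw [hA x, hCinv]
  have hB2 : ∀ x, C (adjoint B x) = -(B (C x)) := fun x => by
    have h := hB (C x); rwa [hCinv] at h
  have hB' : ∀ x, adjoint B x = -C (B (C x)) := fun x => by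
    calc adjoint B x = C (C (adjoint B x)) := (hCinv _).symm
      _ = C (-(B (C x))) := by rw [hB2]
      _ = -C (B (C x)) := hCn _
  have hCB : ∀ x, C (B (C x)) = -adjoint B x := fun x => by
    rw [hB' x, neg_neg]
  -- (3) ↔ (4)
  have P34 : adjoint A * B = adjoint B * A ↔ A * adjoint B = B * adjoint A := by
    constructor
    · intro h
      ext x
      have h1 : adjoint A (B (C x)) = adjoint B (A (C x)) :=
        congrFun (congrArg DFunLike.coe h) (C x)
      rw [hA, hB'] at h1
      have h2 : A (C (B (C x))) = -(B (C (A (C x)))) := by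
        have := congrArg C h1
        rwa [hCinv, hCn, hCinv] at this
      show A (adjoint B x) = B (adjoint A x)
      rw [hB' x, map_neg, h2, neg_neg, hA x]
    · intro h
      ext x
      have h1 : A (adjoint B (C x)) = B (adjoint A (C x)) :=
        congrFun (congrArg DFunLike.coe h) (C x)
      show adjoint A (B x) = adjoint B (A x)
      rw [hB' (C x), hA (C x), hCinv] at h1
      rw [hA (B x), hB' (A x)]
      have h2 : B (C (A x)) = -A (C (B x)) := by rw [← h1, map_neg]
      rw [h2, hCn, neg_neg]
  -- (2) ↔ (3)
  have P23 : (∀ x : H, ‖(A + Complex.I • B) x‖ ^ 2 = ‖A x‖ ^ 2 + ‖B x‖ ^ 2) ↔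
      adjoint A * B = adjoint B * A := by
    have key : ∀ x : H, ‖(A + Complex.I • B) x‖ ^ 2
        = ‖A x‖ ^ 2 + ‖B x‖ ^ 2 + 2 * (Complex.I * ⟪A x, B x⟫_ℂ).re := by
      intro x
      simp only [add_apply, smul_apply]
      rw [@norm_add_sq ℂ, inner_smul_right, norm_smul]
      simp [Complex.norm_I]
      ring
    constructor
    · intro h
      have him : ∀ x : H, (⟪A x, B x⟫_ℂ).im = 0 := by
        intro x
        have hx := h x
        rw [key x] at hx
        have : (Complex.I * ⟪A x, B x⟫_ℂ).re = 0 := by linarith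
        simpa [Complex.mul_re] using this
      have : ((adjoint A * B : H →L[ℂ] H) : H →ₗ[ℂ] H)
          = ((adjoint B * A : H →L[ℂ] H) : H →ₗ[ℂ] H) := by
        rw [← ext_inner_map]
        intro x
        have h1 : ⟪(adjoint A * B) x, x⟫_ℂ = ⟪B x, A x⟫_ℂ := by
          show ⟪adjoint A (B x), x⟫_ℂ = _; rw [adjoint_inner_left]
        have h2 : ⟪(adjoint B * A) x, x⟫_ℂ = ⟪A x, B x⟫_ℂ := by
          show ⟪adjoint B (A x), x⟫_ℂ = _; rw [adjoint_inner_left]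
        show ⟪(adjoint A * B) x, x⟫_ℂ = ⟪(adjoint B * A) x, x⟫_ℂ
        rw [h1, h2, ← inner_conj_symm (B x) (A x)]
        exact Complex.conj_eq_iff_im.mpr (him x)
      exact ContinuousLinearMap.coe_injective this
    · intro h x
      rw [key x]
      have h1 : ⟪A x, B x⟫_ℂ = ⟪B x, A x⟫_ℂ := by
        have e1 : ⟪x, (adjoint A * B) x⟫_ℂ = ⟪A x, B x⟫_ℂ := by
          show ⟪x, adjoint A (B x)⟫_ℂ = _; rw [adjoint_inner_right]
        have e2 : ⟪x, (adjoint B * A) x⟫_ℂ = ⟪B x, A x⟫_ℂ := by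
          show ⟪x, adjoint B (A x)⟫_ℂ = _; rw [adjoint_inner_right]
        rw [← e1, ← e2, h]
      have him : (⟪A x, B x⟫_ℂ).im = 0 := by
        have h2 := h1
        rw [← inner_conj_symm (B x) (A x)] at h2
        exact Complex.conj_eq_iff_im.mp h2.symm
      simp [Complex.mul_re, him]
  -- (1) ↔ (4)
  have P14 : CNormal C (A + Complex.I • B) ↔ A * adjoint B = B * adjoint A := by
    set T := A + Complex.I • B with hT
    have hTapp : ∀ y, T y = A y + Complex.I • B y := fun y => by
      simp [hT]
    have hTadj : ∀ y, adjoint T y = adjoint A y - Complex.I • adjoint B y := fun y => by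
      apply ext_inner_right ℂ
      intro v
      rw [adjoint_inner_left, inner_sub_left, adjoint_inner_left, inner_smul_left,
        adjoint_inner_left, hTapp, inner_add_right, inner_smul_right, Complex.conj_I]
      ring
    have hCu : ∀ x, C (T (C x)) = adjoint A x + Complex.I • adjoint B x := by
      intro x
      rw [hTapp, hCa, hCs, Complex.conj_I, hCB, ← hA x]
      rw [neg_smul, smul_neg, neg_neg]
    have hCT' : ∀ u, C (adjoint T u) = A (C u) - Complex.I • B (C u) := by
      intro u
      rw [hTadj, sub_eq_add_neg, hCa, hCn, hCs, Complex.conj_I, hA2, hB2]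
      rw [neg_smul, smul_neg, neg_neg, ← sub_eq_add_neg]
    have hLHS : ∀ x, C (adjoint T (T (C x)))
        = A (adjoint A x) + Complex.I • A (adjoint B x)
          - Complex.I • B (adjoint A x) + B (adjoint B x) := by
      intro x
      rw [hCT' (T (C x)), hCu]
      simp only [map_add, map_smul, smul_add, smul_smul, Complex.I_mul_I, neg_one_smul]
      module
    have hRHS : ∀ x, T (adjoint T x)
        = A (adjoint A x) - Complex.I • A (adjoint B x)
          + Complex.I • B (adjoint A x) + B (adjoint B x) := by
      intro x
      rw [hTapp, hTadj]
      simp only [map_sub, map_smul, smul_sub, smul_smul, Complex.I_mul_I, neg_one_smul]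
      module
    constructor
    · intro h
      ext x
      have hx := h x
      rw [hLHS, hRHS] at hx
      have h5 : ((2 : ℂ) * Complex.I) • (A (adjoint B x) - B (adjoint A x)) = 0 := by
        linear_combination (norm := module) hx
      have h6 : A (adjoint B x) - B (adjoint A x) = 0 := by
        rcases smul_eq_zero.mp h5 with h' | h'
        · exact absurd h' (by simp [Complex.I_ne_zero])
        · exact h'
      simpa [mul_apply, sub_eq_zero] using h6
    · intro h x
      rw [hLHS, hRHS]
      have hx : A (adjoint B x) = B (adjoint A x) := by
        have := congrFun (congrArg DFunLike.coe h) x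
        simpa [mul_apply] using this
      rw [hx]
      abel
  refine ⟨P14.trans (P34.symm.trans P23.symm), P23, P34⟩
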